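/- Consider the random-access block data structure: for 0 ≤ i ≤ log_b n, s is partitioned into consecutive blocks of length ⌈n/bⁱ⌉, and each block stores a pointer to the first occurrence in s of its content. Then for any position p in a block at level i, if the block's pointer is q (the start of the first occurrence of the block's content), the character s[p] equals s[q + offset] where offset is p minus the block start; and q + offset lies in a well-defined block at level i+1. Iterating for log_b n levels, any character s[p] is retrieved correctly after at most log_b n + 1 pointer-following steps. -/

import Mathlib

/-- Random-access block structure: at level `i` the string is cut into consecutive
blocks of length `⌈n/bⁱ⌉`; if `q` is the start of the first occurrence in `s` of the
content of the block containing position `p`, then `s[p] = s[q + offset]` where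
`offset` is `p` minus the block start, and `q + offset` is a valid position (hence
lies in a well-defined block at level `i+1`).  Moreover at level `⌊log_b n⌋ + 1`
the blocks have length `1`, so any character is retrieved correctly after at most
`log_b n + 1` pointer-following steps. -/
theorem random_access_block_structure {α : Type} (s : List α) (b : ℕ) (hb : 2 ≤ b)
    (i p : ℕ) (hp : p < s.length) :
    (let ℓ := (s.length + b ^ i - 1) / b ^ i
     let st := (p / ℓ) * ℓ
     let blk := (s.drop st).take ℓ
     ∀ q : ℕ, (s.drop q).take blk.length = blk →
       (∀ q' : ℕ, q' < q → (s.drop q').take blk.length ≠ blk) →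
       s[p]? = s[q + (p - st)]? ∧ q + (p - st) < s.length) ∧
    (s.length + b ^ (Nat.log b s.length + 1) - 1) / b ^ (Nat.log b s.length + 1) = 1 := by
  have hn : 0 < s.length := Nat.lt_of_le_of_lt (Nat.zero_le _) hp
  constructor
  · intro ℓ st blk q hq _hmin
    have hBpos : 0 < b ^ i := Nat.pow_pos (by omega)
    have hℓ : 0 < ℓ := Nat.div_pos (by omega) hBpos
    have hst_le : st ≤ p := Nat.div_mul_le_self p ℓ
    have hplt : p < st + ℓ := by
      have h1 : ℓ * (p / ℓ) + p % ℓ = p := Nat.div_add_mod p ℓ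
      have h2 : p % ℓ < ℓ := Nat.mod_lt p hℓ
      have h3 : st = ℓ * (p / ℓ) := Nat.mul_comm _ _
      omega
    have hblen : blk.length = min ℓ (s.length - st) := by
      simp [blk]
    have hj : p - st < blk.length := by omega
    have key : ∀ j', j' < blk.length → s[q + j']? = s[st + j']? := by
      intro j' hj'
      have hcong := congrArg (fun l : List α => l[j']?) hq
      have hj'ℓ : j' < ℓ := by omega
      have hj's : j' < s.length - st := by omega
      rw [List.getElem?_eq_getElem (show st + j' < s.length by omega)]
      simpa [blk, List.getElem?_take, hj', hj'ℓ, hj's, List.getElem?_drop] using hcong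
    have hkey := key (p - st) hj
    have hpeq : st + (p - st) = p := by omega
    rw [hpeq] at hkey
    have hsome : s[q + (p - st)]? = some s[p] := by
      rw [hkey]; exact List.getElem?_eq_getElem hp
    have hlt : q + (p - st) < s.length := by
      by_contra hge
      rw [List.getElem?_eq_none (by omega)] at hsome
      exact Option.some_ne_none _ hsome.symm
    exact ⟨hkey.symm, hlt⟩
  · have hB : s.length < b ^ (Nat.log b s.length + 1) :=
      Nat.lt_pow_succ_log_self (by omega) _
    have hB0 : 0 < b ^ (Nat.log b s.length + 1) := Nat.pow_pos (by omega)
    set B := b ^ (Nat.log b s.length + 1) with hBdef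
    have h1 : 1 * B ≤ s.length + B - 1 := by omega
    have h2 : s.length + B - 1 < (1 + 1) * B := by omega
    exact Nat.div_eq_of_lt_le h1 h2
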